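/- For every word s ∈ S⁺, the set AP(s) of admissible partitions of s is a lattice: if u and u′ are admissible partitions of s, then both their meet u∧u′ and their join u∨u′, taken in the lattice of all partitions of the index set {1,…,l(s)}, are again admissible partitions of s. -/

import Mathlib

/-- The two-letter alphabet `{z, w}`. -/
inductive Letter | z | w
deriving DecidableEq

/-- Words: elements of the free monoid `S = FS({z,w})`. -/
abbrev Word := List Letter

/-- The letter of `s` at position `j` (defaulting to `z`). -/
def letterAt (s : Word) (j : ℕ) : Letter := s.getD j Letter.z

/-- A partition of the index set `{0,…,n−1}` of the word `s` (a setoid on `Fin n`)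
is admissible if no block contains a letter `w` that is inner with respect to
another block: whenever a position `j` with letter `w` lies strictly between two
positions `i < j < k` of the same block, `j` belongs to that block. -/
def AdmissibleSetoid (s : Word) (r : Setoid (Fin s.length)) : Prop :=
  ∀ i j k : Fin s.length, i < j → j < k → letterAt s j = Letter.w →
    r i k → r i j

/-- the admissible partitions of a word form a lattice: meets and joins
(taken in the lattice of all partitions of the index set, i.e. of setoids with the
refinement order) of admissible partitions are admissible. -/
theorem admissible_lattice (s : Word) (hs : s ≠ [])
    (r r' : Setoid (Fin s.length))
    (hr : AdmissibleSetoid s r) (hr' : AdmissibleSetoid s r') :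
    AdmissibleSetoid s (r ⊓ r') ∧ AdmissibleSetoid s (r ⊔ r') := by
  constructor
  · intro i j k hij hjk hw hik
    exact ⟨hr i j k hij hjk hw hik.1, hr' i j k hij hjk hw hik.2⟩
  · -- the join
    set U : Fin s.length → Fin s.length → Prop := fun a b => r a b ∨ r' a b with hU
    have Usymm : Symmetric U := by
      intro a b h
      rcases h with h | h
      · exact Or.inl (r.symm h)
      · exact Or.inr (r'.symm h)
    -- a single step can be cut at an inner w
    have step : ∀ a c j : Fin s.length, U a c → letterAt s j = Letter.w →
        ((a < j ∧ j < c) ∨ (c < j ∧ j < a)) → U a j := by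
      intro a c j hac hw hbet
      rcases hbet with ⟨h1, h2⟩ | ⟨h1, h2⟩
      · rcases hac with h | h
        · exact Or.inl (hr a j c h1 h2 hw h)
        · exact Or.inr (hr' a j c h1 h2 hw h)
      · rcases hac with h | h
        · exact Or.inl (r.symm (r.trans (r.symm (hr c j a h1 h2 hw (r.symm h))) (r.symm h)))
        · exact Or.inr (r'.symm (r'.trans (r'.symm (hr' c j a h1 h2 hw (r'.symm h))) (r'.symm h)))
      -- simpler: from r c a and c<j<a get r c j, then r a j = symm h trans ...
    have key : ∀ b a : Fin s.length, Relation.ReflTransGen U a b →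
        ∀ j : Fin s.length, letterAt s j = Letter.w →
        ((a < j ∧ j < b) ∨ (b < j ∧ j < a)) →
        Relation.ReflTransGen U a j := by
      intro b a h
      induction h using Relation.ReflTransGen.head_induction_on with
      | refl =>
        intro j _ hbet
        rcases hbet with ⟨h1, h2⟩ | ⟨h1, h2⟩ <;> exact absurd (h1.trans h2) (lt_irrefl _)
      | @head a c hac hcb ih =>
        intro j hw hbet
        by_cases hcj : c = j
        · subst hcj; exact Relation.ReflTransGen.single hac
        rcases hbet with ⟨h1, h2⟩ | ⟨h1, h2⟩
        · rcases lt_or_gt_of_ne hcj with hlt | hgt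
          · exact (ih j hw (Or.inl ⟨hlt, h2⟩)).head hac
          · exact Relation.ReflTransGen.single (step a c j hac hw (Or.inl ⟨h1, hgt⟩))
        · rcases lt_or_gt_of_ne hcj with hlt | hgt
          · exact Relation.ReflTransGen.single (step a c j hac hw (Or.inr ⟨hlt, h2⟩))
          · exact (ih j hw (Or.inr ⟨h1, hgt⟩)).head hac
    -- the transitive reflexive closure of U as a setoid
    let T : Setoid (Fin s.length) :=
      ⟨Relation.ReflTransGen U,
        ⟨fun a => Relation.ReflTransGen.refl,
         fun h => (haveI : Std.Symm U := ⟨fun _ _ h => Usymm h⟩; (Relation.ReflTransGen.stdSymm (r := U)).symm _ _ h),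
         fun h h' => h.trans h'⟩⟩
    have hTle : ∀ a b : Fin s.length, Relation.ReflTransGen U a b → (r ⊔ r') a b := by
      intro a b h
      induction h with
      | refl => exact (r ⊔ r').iseqv.refl _
      | tail _ hstep ih =>
        refine (r ⊔ r').iseqv.trans ih ?_
        rcases hstep with h | h
        · exact Setoid.le_def.mp le_sup_left h
        · exact Setoid.le_def.mp le_sup_right h
    have hleT : (r ⊔ r') ≤ T := by
      refine sup_le ?_ ?_ <;> rw [Setoid.le_def] <;> intro a b h
      · exact Relation.ReflTransGen.single (Or.inl h)
      · exact Relation.ReflTransGen.single (Or.inr h)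
    intro i j k hij hjk hw hik
    have hchain : Relation.ReflTransGen U i k := Setoid.le_def.mp hleT hik
    exact hTle i j (key k i hchain j hw (Or.inl ⟨hij, hjk⟩))
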